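/- Let V be a finite-dimensional complex vector space and let ω₁,...,ω_v be 2-forms on V (elements of Λ²V*), each of the form ω_i = dx_i ∧ dy_i for covectors x_i, y_i ∈ V*, such that ω_i ∧ ω_j = 0 for all i, j. Then the span of {x_1,...,x_v, y_1,...,y_v} in V* has dimension at most v+1. -/

import Mathlib

set_option linter.unusedSectionVars false

open Module Submodule ExteriorAlgebra

section helpers
variable {K M : Type*} [Field K] [AddCommGroup M] [Module K M] [FiniteDimensional K M]


lemma wedge_ne_zero (w : Fin 4 → M) (h : LinearIndependent K w) :
    ιMulti K 4 w ≠ 0 := by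
  classical
  set S := span K (Set.range w)
  let b : Basis (Fin 4) K S := Basis.span h
  obtain ⟨T, hT⟩ := Submodule.exists_isCompl S
  let π : M →ₗ[K] S := Submodule.linearProjOfIsCompl S T hT
  let ψ : M →ₗ[K] (Fin 4 → K) := (b.equivFun : S →ₗ[K] (Fin 4 → K)) ∘ₗ π
  have hψ : ∀ i, ψ (w i) = Pi.single i 1 := by
    intro i
    have hmem : w i ∈ S := subset_span (Set.mem_range_self i)
    have hπ : π (w i) = ⟨w i, hmem⟩ := Submodule.linearProjOfIsCompl_apply_left hT ⟨w i, hmem⟩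
    have hb : (⟨w i, hmem⟩ : S) = b i := (Basis.span_apply h i).symm
    simp [ψ, hπ, hb, Basis.equivFun_apply, Basis.repr_self]
    ext j
    rcases eq_or_ne j i with hij | hij
    · simp [hij, Finsupp.single_apply, Pi.single_apply]
    · simp [Finsupp.single_apply, Pi.single_apply, hij, Ne.symm hij]
  -- the alternating form
  let f : M [⋀^Fin 4]→ₗ[K] K := ((Pi.basisFun K (Fin 4)).det).compLinearMap ψ
  have hf : f w = 1 := by
    have h1 : f w = ((Pi.basisFun K (Fin 4)).toMatrix (fun i => ψ (w i))).det := by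
      rw [AlternatingMap.compLinearMap_apply, Basis.det_apply]
    rw [h1]
    have h2 : ((Pi.basisFun K (Fin 4)).toMatrix (fun i => ψ (w i))) = 1 := by
      ext i j
      rw [Basis.toMatrix_apply, Pi.basisFun_repr, hψ j]
      by_cases hij : i = j <;> simp [hij, Matrix.one_apply, Pi.single_apply, eq_comm]
    rw [h2, Matrix.det_one]
  intro hzero
  let F : ∀ i, M [⋀^Fin i]→ₗ[K] K := Function.update (fun i => 0) 4 f
  have := ExteriorAlgebra.liftAlternating_apply_ιMulti F w
  rw [hzero] at this
  simp only [map_zero] at this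
  have hF4 : F 4 = f := by simp [F]
  rw [hF4, hf] at this
  exact one_ne_zero this.symm


omit [FiniteDimensional K M] in
lemma range4 (a b c d : M) : Set.range ![a, b, c, d] = {a, b, c, d} := by
  ext z
  simp [Matrix.range_cons, Matrix.range_empty]
  tauto

omit [FiniteDimensional K M] in
lemma rank_singleton_le (a : M) : finrank K (span K ({a} : Set M)) ≤ 1 := by
  by_cases h : a = 0
  · subst h; rw [Submodule.span_zero_singleton]; simp
  · rw [show (span K ({a} : Set M)) = K ∙ a from rfl, finrank_span_singleton h]

omit [FiniteDimensional K M] in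
lemma prod4 (a b c d : M) :
    ιMulti K 4 ![a, b, c, d] = ι K a * ι K b * ι K c * ι K d := by
  simp [ExteriorAlgebra.ιMulti_apply, List.ofFn_succ, mul_assoc]

lemma finrank_sup_le' (A B : Submodule K M) :
    finrank K ↥(A ⊔ B) ≤ finrank K A + finrank K B := by
  have := Submodule.finrank_sup_add_finrank_inf_eq A B
  omega

lemma span4_le (a b c d : M) (h : ¬ LinearIndependent K ![a, b, c, d]) :
    finrank K (span K ({a, b, c, d} : Set M)) ≤ 3 := by
  by_contra hc
  push_neg at hc
  have h4 : finrank K (span K ({a, b, c, d} : Set M)) ≤ 4 := by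
    have hsp : span K ({a, b, c, d} : Set M) =
        span K {a} ⊔ (span K {b} ⊔ (span K {c} ⊔ span K {d})) := by
      rw [show ({a, b, c, d} : Set M) = insert a (insert b (insert c {d})) from rfl]
      rw [Submodule.span_insert, Submodule.span_insert, Submodule.span_insert]
    rw [hsp]
    have r1 := rank_singleton_le (K := K) a
    have r2 := rank_singleton_le (K := K) b
    have r3 := rank_singleton_le (K := K) c
    have r4 := rank_singleton_le (K := K) d
    have s3 := finrank_sup_le' (span K ({c} : Set M)) (span K ({d} : Set M))
    have s2 := finrank_sup_le' (span K ({b} : Set M)) (span K ({c} : Set M) ⊔ span K ({d} : Set M))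
    have s1 := finrank_sup_le' (span K ({a} : Set M))
      (span K ({b} : Set M) ⊔ (span K ({c} : Set M) ⊔ span K ({d} : Set M)))
    omega
  have heq : finrank K (span K (Set.range ![a, b, c, d])) = 4 := by
    rw [range4]; omega
  have : LinearIndependent K ![a, b, c, d] :=
    linearIndependent_iff_card_eq_finrank_span.mpr
      (by simpa [Set.finrank] using heq.symm)
  exact h this

lemma finrank_iSup_le {ι : Type*} [Fintype ι] (Q : ι → Submodule K M) :
    finrank K ↥(⨆ i, Q i) ≤ ∑ i, finrank K (Q i) := by
  classical
  rw [show (⨆ i, Q i) = ⨆ i ∈ Finset.univ, Q i by simp]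
  rw [show (∑ i, finrank K (Q i)) = ∑ i ∈ Finset.univ, finrank K (Q i) from rfl]
  induction (Finset.univ : Finset ι) using Finset.induction_on with
  | empty => simp
  | insert _ _ hx ih =>
    rename_i a s
    rw [Finset.iSup_insert, Finset.sum_insert hx]
    exact (finrank_sup_le' _ _).trans (by omega)

lemma line_eq (L N : Submodule K M) (hL : finrank K L = 1) (hle : N ≤ L) (hne : N ≠ ⊥) :
    N = L := by
  apply Submodule.eq_of_le_of_finrank_le hle
  rw [hL]
  have : 0 < finrank K N := by
    rw [Module.finrank_pos_iff]
    exact Submodule.nontrivial_iff_ne_bot.mpr hne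
  omega

lemma inf_rank_pos (A B : Submodule K M) (hA : finrank K A = 2) (hB : finrank K B = 2)
    (h : finrank K ↥(A ⊔ B) ≤ 3) : A ⊓ B ≠ ⊥ := by
  have := Submodule.finrank_sup_add_finrank_inf_eq A B
  rw [hA, hB] at this
  intro hbot
  rw [hbot, finrank_bot] at this
  omega

lemma plane_through (e a b : M) (he : e ≠ 0) (hmem : e ∈ span K ({a, b} : Set M)) :
    ∃ u : M, span K ({a, b} : Set M) ≤ span K ({e, u} : Set M) := by
  rw [Submodule.mem_span_pair] at hmem
  obtain ⟨s, t, hst⟩ := hmem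
  by_cases hs : s = 0
  · have ht : t ≠ 0 := by
      intro ht; rw [hs, ht] at hst; simp at hst; exact he hst.symm
    refine ⟨a, span_le.mpr ?_⟩
    rintro z (rfl | rfl)
    · exact subset_span (by simp)
    · have : z = t⁻¹ • e := by
        rw [← hst, hs]; simp [smul_smul, inv_mul_cancel₀ ht]
      rw [this]
      exact Submodule.smul_mem _ _ (subset_span (by simp))
  · refine ⟨b, span_le.mpr ?_⟩
    rintro z (rfl | rfl)
    · have : z = s⁻¹ • (e - t • b) := by
        rw [← hst]; simp [smul_sub, smul_smul, inv_mul_cancel₀ hs]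
      rw [this]
      apply Submodule.smul_mem
      apply Submodule.sub_mem
      · exact subset_span (by simp)
      · exact Submodule.smul_mem _ _ (subset_span (by simp))
    · exact subset_span (by simp)

lemma nonbot_rank_pos (N : Submodule K M) (h : N ≠ ⊥) : 1 ≤ finrank K N := by
  have : 0 < finrank K N := by
    rw [Module.finrank_pos_iff]; exact Submodule.nontrivial_iff_ne_bot.mpr h
  omega

lemma plane_le_sup (Pm Pi Pj : Submodule K M) (hm : finrank K Pm = 2)
    (h1 : Pm ⊓ Pi ≠ ⊥) (h2 : Pm ⊓ Pj ≠ ⊥) (h12 : Pm ⊓ Pi ≠ Pm ⊓ Pj) :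
    Pm ≤ Pi ⊔ Pj := by
  set A := Pm ⊓ Pi with hA
  set B := Pm ⊓ Pj with hB
  have hABm : A ⊔ B ≤ Pm := sup_le inf_le_left inf_le_left
  have hr : 2 ≤ finrank K ↥(A ⊔ B) := by
    by_contra hle
    push_neg at hle
    have hA1 := nonbot_rank_pos A h1
    have hB1 := nonbot_rank_pos B h2
    have hAB : A = A ⊔ B :=
      Submodule.eq_of_le_of_finrank_le le_sup_left (by omega)
    have hBA : B = A ⊔ B :=
      Submodule.eq_of_le_of_finrank_le le_sup_right (by omega)
    exact h12 (hAB.trans hBA.symm)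
  have heq : A ⊔ B = Pm :=
    Submodule.eq_of_le_of_finrank_le hABm (by omega)
  rw [← heq]
  exact sup_le (inf_le_right.trans le_sup_left) (inf_le_right.trans le_sup_right)

/-- Core geometric lemma. -/
lemma core_lemma (v : ℕ) (x y : Fin v → M)
    (h3 : ∀ i j, finrank K
      ↥(span K ({x i, y i} : Set M) ⊔ span K ({x j, y j} : Set M)) ≤ 3) :
    finrank K ↥(span K (Set.range x ∪ Set.range y)) ≤ v + 1 := by
  classical
  set P : Fin v → Submodule K M := fun i => span K ({x i, y i} : Set M) with hPdef
  have hspan : span K (Set.range x ∪ Set.range y) = ⨆ i, P i := by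
    apply le_antisymm
    · rw [span_le]
      rintro z (⟨i, rfl⟩ | ⟨i, rfl⟩)
      · exact Submodule.mem_iSup_of_mem i (subset_span (by simp))
      · exact Submodule.mem_iSup_of_mem i (subset_span (by simp))
    · apply iSup_le
      intro i
      apply span_le.mpr
      rintro z (rfl | rfl)
      · exact subset_span (Or.inl ⟨i, rfl⟩)
      · exact subset_span (Or.inr ⟨i, rfl⟩)
  rw [hspan]
  have hP2 : ∀ i, finrank K (P i) ≤ 2 := by
    intro i
    have : P i = span K {x i} ⊔ span K {y i} := by
      show span K ({x i, y i} : Set M) = _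
      rw [show ({x i, y i} : Set M) = insert (x i) {y i} from rfl,
        Submodule.span_insert]
    rw [this]
    have := finrank_sup_le' (span K ({x i} : Set M)) (span K ({y i} : Set M))
    have := rank_singleton_le (K := K) (x i)
    have := rank_singleton_le (K := K) (y i)
    omega
  by_cases hcom : ∃ e : M, e ≠ 0 ∧ ∀ i, finrank K (P i) = 2 → e ∈ P i
  · -- common line case
    obtain ⟨e, he0, he⟩ := hcom
    have hQ : ∀ i, ∃ Q : Submodule K M, finrank K Q ≤ 1 ∧ P i ≤ span K {e} ⊔ Q := by
      intro i
      by_cases hi : finrank K (P i) = 2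
      · obtain ⟨u, hu⟩ := plane_through e (x i) (y i) he0 (he i hi)
        refine ⟨span K {u}, rank_singleton_le u, ?_⟩
        rw [hPdef]
        refine hu.trans ?_
        rw [show ({e, u} : Set M) = insert e {u} from rfl, Submodule.span_insert]
      · exact ⟨P i, by have := hP2 i; omega, le_sup_right⟩
    choose Q hQ1 hQ2 using hQ
    have hle : (⨆ i, P i) ≤ span K {e} ⊔ ⨆ i, Q i :=
      iSup_le fun i => (hQ2 i).trans (sup_le_sup_left (le_iSup Q i) _)
    have h1 := Submodule.finrank_mono hle
    have h2 := finrank_sup_le' (span K ({e} : Set M)) (⨆ i, Q i)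
    have h4 := finrank_iSup_le Q
    have h5 : ∑ i, finrank K (Q i) ≤ v := by
      calc ∑ i, finrank K (Q i) ≤ ∑ _i : Fin v, 1 := Finset.sum_le_sum fun i _ => hQ1 i
        _ = v := by simp
    have h6 := rank_singleton_le (K := K) e
    omega
  · -- no common line
    by_cases hgen : ∃ i0 j0, finrank K (P i0) = 2 ∧ finrank K (P j0) = 2 ∧ P i0 ≠ P j0
    · obtain ⟨i0, j0, hi0, hj0, hne⟩ := hgen
      set L := P i0 ⊓ P j0 with hLdef
      set E := P i0 ⊔ P j0 with hEdef
      have hE3 : finrank K E ≤ 3 := h3 i0 j0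
      have hsum := Submodule.finrank_sup_add_finrank_inf_eq (P i0) (P j0)
      rw [hi0, hj0, ← hLdef, ← hEdef] at hsum
      have hL1 : finrank K L = 1 := by
        by_contra hL
        have h1L : 1 ≤ finrank K L := by omega
        have h2L : 2 ≤ finrank K L := by omega
        have e1 : L = P i0 :=
          Submodule.eq_of_le_of_finrank_le (inf_le_left : L ≤ P i0) (hi0.le.trans h2L)
        have e2 : L = P j0 :=
          Submodule.eq_of_le_of_finrank_le (inf_le_right : L ≤ P j0) (hj0.le.trans h2L)
        exact hne (e1 ▸ e2 ▸ rfl)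
      have hE3' : finrank K E = 3 := by omega
      -- all genuine planes lie in E
      have hallE : ∀ k, finrank K (P k) = 2 → P k ≤ E := by
        by_contra hk'
        push_neg at hk'
        obtain ⟨k, hk2, hkE⟩ := hk'
        have hKL : L ≤ P k := by
          have hK1 : P k ⊓ P i0 ≠ ⊥ := inf_rank_pos _ _ hk2 hi0 (h3 k i0)
          have hK2 : P k ⊓ P j0 ≠ ⊥ := inf_rank_pos _ _ hk2 hj0 (h3 k j0)
          by_cases hK12 : P k ⊓ P i0 = P k ⊓ P j0
          · have hsub : P k ⊓ P i0 ≤ L :=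
              le_inf inf_le_right (hK12.le.trans inf_le_right)
            have := line_eq L (P k ⊓ P i0) hL1 hsub hK1
            rw [← this]
            exact inf_le_left
          · exact absurd (plane_le_sup _ _ _ hk2 hK1 hK2 hK12) hkE
        -- E ⊓ P k = L
        have hEkL : E ⊓ P k = L := by
          have hlt : E < E ⊔ P k := by
            refine lt_of_le_of_ne le_sup_left ?_
            intro hEq
            exact hkE (le_sup_right.trans hEq.ge)
          have h4 : 4 ≤ finrank K ↥(E ⊔ P k) := by
            have := finrank_lt_finrank_of_lt hlt
            omega
          have hsum2 := Submodule.finrank_sup_add_finrank_inf_eq E (P k)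
          rw [hE3', hk2] at hsum2
          have hinf1 : finrank K ↥(E ⊓ P k) ≤ 1 := by omega
          have hLle : L ≤ E ⊓ P k := le_inf (inf_le_left.trans le_sup_left) hKL
          exact (Submodule.eq_of_le_of_finrank_le hLle (by omega)).symm
        -- every genuine plane contains L : contradicts hcom
        obtain ⟨e, heL, he0⟩ := Submodule.exists_mem_ne_zero_of_ne_bot
          (show L ≠ ⊥ by intro hb; rw [hb, finrank_bot] at hL1; omega)
        refine hcom ⟨e, he0, ?_⟩
        intro m hm2
        have hM1 : P m ⊓ P i0 ≠ ⊥ := inf_rank_pos _ _ hm2 hi0 (h3 m i0)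
        have hM2 : P m ⊓ P j0 ≠ ⊥ := inf_rank_pos _ _ hm2 hj0 (h3 m j0)
        have hLm : L ≤ P m := by
          by_cases hM12 : P m ⊓ P i0 = P m ⊓ P j0
          · have hsub : P m ⊓ P i0 ≤ L :=
              le_inf inf_le_right (hM12.le.trans inf_le_right)
            have := line_eq L (P m ⊓ P i0) hL1 hsub hM1
            rw [← this]
            exact inf_le_left
          · have hmE : P m ≤ E := plane_le_sup _ _ _ hm2 hM1 hM2 hM12
            have hM3 : P m ⊓ P k ≠ ⊥ := inf_rank_pos _ _ hm2 hk2 (h3 m k)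
            have hsub : P m ⊓ P k ≤ L := by
              rw [← hEkL]
              exact le_inf (inf_le_left.trans hmE) inf_le_right
            have := line_eq L (P m ⊓ P k) hL1 hsub hM3
            rw [← this]
            exact inf_le_left
        exact hLm heL
      -- bound: everything inside E plus degenerate lines
      set Q : Fin v → Submodule K M :=
        fun i => if finrank K (P i) = 2 then ⊥ else P i with hQdef
      have hle : (⨆ i, P i) ≤ E ⊔ ⨆ i, Q i := by
        apply iSup_le
        intro i
        by_cases hi : finrank K (P i) = 2
        · exact (hallE i hi).trans le_sup_left
        · refine le_trans ?_ (le_sup_right : (⨆ i, Q i) ≤ _)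
          refine le_trans ?_ (le_iSup Q i)
          rw [hQdef]
          simp [hi]
      have h1 := Submodule.finrank_mono hle
      have h2 := finrank_sup_le' E (⨆ i, Q i)
      have h4 := finrank_iSup_le Q
      have hij : i0 ≠ j0 := fun h => hne (by rw [h])
      have h5 : ∑ i, finrank K (Q i) ≤ v - 2 ∧ 2 ≤ v := by
        have hQ1 : ∀ i, finrank K (Q i) ≤ 1 := by
          intro i
          show finrank K ↥(if finrank K ↥(P i) = 2 then (⊥ : Submodule K M) else P i) ≤ 1
          by_cases hi : finrank K (P i) = 2
          · rw [if_pos hi]; simp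
          · rw [if_neg hi]
            have := hP2 i
            omega
        have hQi0 : finrank K (Q i0) = 0 := by
          show finrank K ↥(if finrank K ↥(P i0) = 2 then (⊥ : Submodule K M) else P i0) = 0
          rw [if_pos hi0]; simp
        have hQj0 : finrank K (Q j0) = 0 := by
          show finrank K ↥(if finrank K ↥(P j0) = 2 then (⊥ : Submodule K M) else P j0) = 0
          rw [if_pos hj0]; simp
        have e1 : ∑ i ∈ (Finset.univ.erase i0), finrank K (Q i) + finrank K (Q i0)
            = ∑ i, finrank K (Q i) := Finset.sum_erase_add _ _ (Finset.mem_univ i0)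
        have hj0mem : j0 ∈ Finset.univ.erase i0 :=
          Finset.mem_erase.mpr ⟨fun h => hij h.symm, Finset.mem_univ j0⟩
        have e2 : ∑ i ∈ ((Finset.univ.erase i0).erase j0), finrank K (Q i) + finrank K (Q j0)
            = ∑ i ∈ (Finset.univ.erase i0), finrank K (Q i) :=
          Finset.sum_erase_add _ _ hj0mem
        have e3 : ∑ i ∈ ((Finset.univ.erase i0).erase j0), finrank K (Q i)
            ≤ ((Finset.univ.erase i0).erase j0).card := by
          calc _ ≤ ∑ _i ∈ ((Finset.univ.erase i0).erase j0), 1 :=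
              Finset.sum_le_sum fun i _ => hQ1 i
            _ = _ := by simp
        have hcard : ((Finset.univ.erase i0).erase j0).card = v - 2 := by
          rw [Finset.card_erase_of_mem hj0mem, Finset.card_erase_of_mem (Finset.mem_univ i0)]
          simp only [Finset.card_univ, Fintype.card_fin]
          omega
        have hv2 : 2 ≤ v := by
          have : 1 < Fintype.card (Fin v) :=
            Fintype.one_lt_card_iff_nontrivial.mpr ⟨⟨i0, j0, hij⟩⟩
          simp at this; omega
        constructor
        · omega
        · exact hv2
      omega
    · -- all genuine planes are equal (or none exist)
      push_neg at hgen
      by_cases hex : ∃ i0, finrank K (P i0) = 2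
      · obtain ⟨i0, hi0⟩ := hex
        obtain ⟨e, heP, he0⟩ := Submodule.exists_mem_ne_zero_of_ne_bot
          (show P i0 ≠ ⊥ by intro hb; rw [hb, finrank_bot] at hi0; omega)
        exact absurd ⟨e, he0, fun i hi => (hgen i0 i hi0 hi) ▸ heP⟩ hcom
      · push_neg at hex
        have h1 := finrank_iSup_le P
        have h5 : ∑ i, finrank K (P i) ≤ v := by
          have hb : ∀ i ∈ Finset.univ, finrank K (P i) ≤ 1 := by
            intro i _
            have := hP2 i
            have := hex i
            omega
          calc ∑ i, finrank K (P i) ≤ ∑ _i : Fin v, 1 := Finset.sum_le_sum hb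
            _ = v := by simp
        omega
end helpers

/-- Let `V` be a finite-dimensional complex vector space and let
`ω₁, …, ω_v` be 2-forms on `V` (elements of `Λ²V*`), each of the form
`ω_i = dx_i ∧ dy_i` for covectors `x_i, y_i ∈ V*`, such that `ω_i ∧ ω_j = 0`
for all `i, j`.  Then the span of `{x_1,…,x_v, y_1,…,y_v}` in `V*` has
dimension at most `v + 1`.  (Wedge products are taken in the exterior algebra
of `V*`.) -/
theorem stmt_0 {V : Type*} [AddCommGroup V] [Module ℂ V] [FiniteDimensional ℂ V]
    (v : ℕ) (x y : Fin v → Module.Dual ℂ V)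
    (hrank2 : ∀ i j : Fin v,
      (ExteriorAlgebra.ι ℂ (x i) * ExteriorAlgebra.ι ℂ (y i)) *
        (ExteriorAlgebra.ι ℂ (x j) * ExteriorAlgebra.ι ℂ (y j)) = 0) :
    Module.finrank ℂ
      (Submodule.span ℂ (Set.range x ∪ Set.range y) : Submodule ℂ (Module.Dual ℂ V))
      ≤ v + 1 := by
  apply core_lemma
  intro i j
  have hdep : ¬ LinearIndependent ℂ ![x i, y i, x j, y j] := by
    intro hLI
    apply wedge_ne_zero _ hLI
    rw [prod4]
    have := hrank2 i j
    rw [← this, mul_assoc]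
  have h4 := span4_le (x i) (y i) (x j) (y j) hdep
  have hun : Submodule.span ℂ ({x i, y i} : Set (Module.Dual ℂ V)) ⊔
      Submodule.span ℂ ({x j, y j} : Set (Module.Dual ℂ V)) =
      Submodule.span ℂ ({x i, y i, x j, y j} : Set (Module.Dual ℂ V)) := by
    rw [← Submodule.span_union]
    congr 1
    ext z
    simp
    tauto
  rw [hun]
  exact h4
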